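/- arXiv:2003.06972 — 2 statements merged into one kernel-verified Lean document; each statement's English description precedes it below -/
import Mathlib

section
/- Let n ∈ ℝ³ be a unit vector with P = I − n nᵀ, and let F be a triangle face with unit normal n_F such that |n·n_F| ≥ c > 0. Let t₁, t₂, t₃ be unit vectors spanning the edge directions of F (i.e., any two of them are linearly independent and all lie in the plane orthogonal to n_F). Then there is a constant c' > 0 depending only on c and the angles between the tᵢ such that for every z ∈ ℝ³: ∑_{i=1}^{3} |tᵢ · (P z)|² ≥ c' · ‖P z‖₂². -/
open scoped RealInnerProductSpace

theorem stmt_3 (n nF : EuclideanSpace ℝ (Fin 3)) (hn : ‖n‖ = 1) (hnF : ‖nF‖ = 1)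
    (c : ℝ) (hc : 0 < c) (hangle : c ≤ |⟪n, nF⟫|)
    (t : Fin 3 → EuclideanSpace ℝ (Fin 3)) (ht : ∀ i, ‖t i‖ = 1)
    (htF : ∀ i, ⟪t i, nF⟫ = 0)
    (hind : ∀ i j, i ≠ j → LinearIndependent ℝ ![t i, t j]) :
    ∃ c' > 0, ∀ z : EuclideanSpace ℝ (Fin 3),
      ∑ i : Fin 3, ⟪t i, z - ⟪n, z⟫ • n⟫ ^ 2 ≥ c' * ‖z - ⟪n, z⟫ • n‖ ^ 2 := by
  classical
  have hnnF : ⟪n, nF⟫ ≠ 0 := by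
    intro h; rw [h, abs_zero] at hangle; linarith
  have hnF0 : nF ≠ 0 := by
    intro h; rw [h, norm_zero] at hnF; norm_num at hnF
  have hn0 : n ≠ 0 := by
    intro h; rw [h, norm_zero] at hn; norm_num at hn
  -- span of t 0, t 1 equals orthogonal complement of nF
  have hspan : Submodule.span ℝ {t 0, t 1} = (ℝ ∙ nF)ᗮ := by
    have hle : Submodule.span ℝ {t 0, t 1} ≤ (ℝ ∙ nF)ᗮ := by
      rw [Submodule.span_le]
      rintro x (rfl | rfl) <;>
        · rw [SetLike.mem_coe, Submodule.mem_orthogonal_singleton_iff_inner_right,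
            real_inner_comm]
          exact htF _
    have hfr1 : Module.finrank ℝ (Submodule.span ℝ {t 0, t 1}) = 2 := by
      have hli := hind 0 1 (by decide)
      have h2 : Set.range ![t 0, t 1] = {t 0, t 1} := by
        simp [Matrix.range_cons, Matrix.range_empty]
        exact Set.pair_comm _ _
      rw [← h2, finrank_span_eq_card hli]
      simp
    have hfr2 : Module.finrank ℝ ((ℝ ∙ nF)ᗮ : Submodule ℝ (EuclideanSpace ℝ (Fin 3))) = 2 := by
      have h1 : Module.finrank ℝ (ℝ ∙ nF : Submodule ℝ (EuclideanSpace ℝ (Fin 3))) = 1 :=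
        finrank_span_singleton hnF0
      have h3 := Submodule.finrank_add_finrank_orthogonal (K := (ℝ ∙ nF :
        Submodule ℝ (EuclideanSpace ℝ (Fin 3))))
      rw [h1] at h3
      have h4 : Module.finrank ℝ (EuclideanSpace ℝ (Fin 3)) = 3 := by simp
      omega
    exact Submodule.eq_of_le_of_finrank_eq hle (by rw [hfr1, hfr2])
  -- positivity on the unit circle orthogonal to n
  have key : ∀ w : EuclideanSpace ℝ (Fin 3), ‖w‖ = 1 → ⟪n, w⟫ = 0 →
      0 < ∑ i : Fin 3, ⟪t i, w⟫ ^ 2 := by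
    intro w hw hnw
    have hnonneg : (0:ℝ) ≤ ∑ i : Fin 3, ⟪t i, w⟫ ^ 2 :=
      Finset.sum_nonneg fun i _ => sq_nonneg _
    rcases hnonneg.lt_or_eq with h | h
    · exact h
    exfalso
    have hall : ∀ i : Fin 3, ⟪t i, w⟫ = 0 := by
      intro i
      have := (Finset.sum_eq_zero_iff_of_nonneg (fun i _ => sq_nonneg (⟪t i, w⟫))).1
        h.symm i (Finset.mem_univ i)
      exact pow_eq_zero_iff (by norm_num) |>.1 this
    -- w is orthogonal to span {t 0, t 1} = (ℝ ∙ nF)ᗮ, hence w ∈ ℝ ∙ nF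
    have hwmem : w ∈ (Submodule.span ℝ {t 0, t 1})ᗮ := by
      rw [Submodule.mem_orthogonal]
      intro u hu
      induction hu using Submodule.span_induction with
      | mem x hx =>
        rcases hx with rfl | rfl
        · exact hall 0
        · exact hall 1
      | zero => simp
      | add x y _ _ hx hy => rw [inner_add_left, hx, hy, add_zero]
      | smul a x _ hx => rw [inner_smul_left, hx, mul_zero]
    rw [hspan, Submodule.orthogonal_orthogonal] at hwmem
    rcases Submodule.mem_span_singleton.1 hwmem with ⟨a, rfl⟩
    rw [real_inner_smul_right] at hnw
    rcases mul_eq_zero.1 hnw with rfl | h0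
    · rw [zero_smul, norm_zero] at hw; norm_num at hw
    · exact hnnF h0
  -- compactness: minimum on the circle
  set S : Set (EuclideanSpace ℝ (Fin 3)) :=
    Metric.sphere 0 1 ∩ {w | ⟪n, w⟫ = 0} with hS
  have hScompact : IsCompact S := by
    apply (isCompact_sphere (0 : EuclideanSpace ℝ (Fin 3)) 1).inter_right
    exact isClosed_eq (Continuous.inner continuous_const continuous_id) continuous_const
  have hSne : S.Nonempty := by
    have hlt : (ℝ ∙ n : Submodule ℝ (EuclideanSpace ℝ (Fin 3))) ≠ ⊤ := by
      intro h
      have h1 : Module.finrank ℝ (ℝ ∙ n : Submodule ℝ (EuclideanSpace ℝ (Fin 3))) = 1 :=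
        finrank_span_singleton hn0
      rw [h] at h1
      have : Module.finrank ℝ ((⊤ : Submodule ℝ (EuclideanSpace ℝ (Fin 3)))) = 3 := by
        simp [finrank_top]
      omega
    have hne : ((ℝ ∙ n : Submodule ℝ (EuclideanSpace ℝ (Fin 3)))ᗮ) ≠ ⊥ := by
      intro h
      apply hlt
      have := Submodule.orthogonal_orthogonal (K := (ℝ ∙ n :
        Submodule ℝ (EuclideanSpace ℝ (Fin 3))))
      rw [← this, h, Submodule.bot_orthogonal_eq_top]
    rcases Submodule.exists_mem_ne_zero_of_ne_bot hne with ⟨w, hwmem, hw0⟩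
    refine ⟨‖w‖⁻¹ • w, ?_, ?_⟩
    · simp only [Metric.mem_sphere, dist_zero_right, norm_smul, norm_inv, norm_norm]
      exact inv_mul_cancel₀ (norm_ne_zero_iff.2 hw0)
    · have hnw0 : ⟪n, w⟫ = 0 :=
        (Submodule.mem_orthogonal _ _).1 hwmem n (Submodule.mem_span_singleton_self n)
      show ⟪n, ‖w‖⁻¹ • w⟫ = 0
      rw [real_inner_smul_right, hnw0, mul_zero]
  have hcont : Continuous fun w : EuclideanSpace ℝ (Fin 3) => ∑ i : Fin 3, ⟪t i, w⟫ ^ 2 := by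
    apply continuous_finset_sum
    intro i _
    exact ((Continuous.inner continuous_const continuous_id).pow 2)
  obtain ⟨w₀, hw₀S, hw₀min⟩ := hScompact.exists_isMinOn hSne hcont.continuousOn
  set c' := ∑ i : Fin 3, ⟪t i, w₀⟫ ^ 2 with hc'
  have hc'pos : 0 < c' := key w₀ (by simpa using hw₀S.1) hw₀S.2
  refine ⟨c', hc'pos, ?_⟩
  intro z
  set w := z - ⟪n, z⟫ • n with hwdef
  have hnw : ⟪n, w⟫ = 0 := by
    rw [hwdef, inner_sub_right, real_inner_smul_right, real_inner_self_eq_norm_sq, hn]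
    ring
  by_cases hw0 : w = 0
  · rw [hw0]; simp
  · have hwn : ‖w‖ ≠ 0 := norm_ne_zero_iff.2 hw0
    have hwpos : 0 < ‖w‖ := norm_pos_iff.2 hw0
    have hu : (‖w‖⁻¹ • w) ∈ S := by
      constructor
      · simp only [Metric.mem_sphere, dist_zero_right, norm_smul, norm_inv, norm_norm]
        exact inv_mul_cancel₀ hwn
      · show ⟪n, ‖w‖⁻¹ • w⟫ = 0
        rw [real_inner_smul_right, hnw, mul_zero]
    have hmin : c' ≤ ∑ i : Fin 3, ⟪t i, ‖w‖⁻¹ • w⟫ ^ 2 := hw₀min hu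
    have heq : ∑ i : Fin 3, ⟪t i, ‖w‖⁻¹ • w⟫ ^ 2
        = ‖w‖⁻¹ ^ 2 * ∑ i : Fin 3, ⟪t i, w⟫ ^ 2 := by
      rw [Finset.mul_sum]
      congr 1
      ext i
      rw [real_inner_smul_right]
      ring
    rw [heq] at hmin
    have h2 : c' * ‖w‖ ^ 2 ≤ ∑ i : Fin 3, ⟪t i, w⟫ ^ 2 := by
      have hw2 : 0 < ‖w‖ ^ 2 := by positivity
      calc c' * ‖w‖ ^ 2 ≤ (‖w‖⁻¹ ^ 2 * ∑ i : Fin 3, ⟪t i, w⟫ ^ 2) * ‖w‖ ^ 2 := by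
            exact mul_le_mul_of_nonneg_right hmin (le_of_lt hw2)
        _ = ∑ i : Fin 3, ⟪t i, w⟫ ^ 2 := by
            field_simp
    exact h2
end

section
/- Let B : ℝ³ → ℝ³ be a linear map of the form B = P(I − dH)P_h, where P = I − n nᵀ and P_h = I − m mᵀ are orthogonal projections for unit vectors n, m with n·m > 1/2, H is a symmetric matrix with H n = 0, and d ∈ ℝ with |d|·‖H‖₂ < 1/2. Then B restricted to range(P_h) is an isomorphism onto range(P): there exists B⁻¹ : range(P) → range(P_h) with B B⁻¹ = P and B⁻¹ B = P_h. -/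
open scoped RealInnerProductSpace
open ContinuousLinearMap

/-- The orthogonal projection `I - n nᵀ` onto the plane orthogonal to `n`. -/
noncomputable def orthProj (n : EuclideanSpace ℝ (Fin 3)) :
    EuclideanSpace ℝ (Fin 3) →L[ℝ] EuclideanSpace ℝ (Fin 3) :=
  ContinuousLinearMap.id ℝ _ - (innerSL ℝ n).smulRight n

lemma orthProj_apply (n x : EuclideanSpace ℝ (Fin 3)) :
    orthProj n x = x - ⟪n, x⟫ • n := by
  simp [orthProj]

lemma inner_orthProj (n : EuclideanSpace ℝ (Fin 3)) (hn : ‖n‖ = 1)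
    (x : EuclideanSpace ℝ (Fin 3)) : ⟪n, orthProj n x⟫ = 0 := by
  have : ⟪n, n⟫ = 1 := by rw [real_inner_self_eq_norm_sq, hn]; norm_num
  rw [orthProj_apply, inner_sub_right, real_inner_smul_right, this, mul_one, sub_self]

lemma orthProj_of_inner (n x : EuclideanSpace ℝ (Fin 3)) (h : ⟪n, x⟫ = 0) :
    orthProj n x = x := by
  simp [orthProj_apply, h]

theorem stmt_4 (n m : EuclideanSpace ℝ (Fin 3)) (hn : ‖n‖ = 1) (hm : ‖m‖ = 1)
    (hnm : 1 / 2 < ⟪n, m⟫)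
    (H : EuclideanSpace ℝ (Fin 3) →L[ℝ] EuclideanSpace ℝ (Fin 3))
    (hHsym : ∀ x y, ⟪H x, y⟫ = ⟪x, H y⟫) (hHn : H n = 0)
    (d : ℝ) (hd : |d| * ‖H‖ < 1 / 2) :
    ∃ Binv : EuclideanSpace ℝ (Fin 3) →L[ℝ] EuclideanSpace ℝ (Fin 3),
      Binv = orthProj m ∘L Binv ∘L orthProj n ∧
      (orthProj n ∘L (ContinuousLinearMap.id ℝ _ - d • H) ∘L orthProj m) ∘L Binv =
        orthProj n ∧
      Binv ∘L (orthProj n ∘L (ContinuousLinearMap.id ℝ _ - d • H) ∘L orthProj m) =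
        orthProj m := by
  have hnn : ⟪n, n⟫ = 1 := by rw [real_inner_self_eq_norm_sq, hn]; norm_num
  -- invertibility of I - d•H
  have hnorm : ‖d • H‖ < 1 := by
    calc ‖d • H‖ ≤ ‖d‖ * ‖H‖ := norm_smul_le d H
    _ = |d| * ‖H‖ := by rw [Real.norm_eq_abs]
    _ < 1 := hd.trans (by norm_num)
  set T := ContinuousLinearMap.id ℝ (EuclideanSpace ℝ (Fin 3)) - d • H with hT
  set u : (EuclideanSpace ℝ (Fin 3) →L[ℝ] EuclideanSpace ℝ (Fin 3))ˣ :=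
    Units.oneSub (d • H) hnorm with hu
  set K := (↑u⁻¹ : EuclideanSpace ℝ (Fin 3) →L[ℝ] EuclideanSpace ℝ (Fin 3)) with hKdef
  have hId : T = (↑u :
      EuclideanSpace ℝ (Fin 3) →L[ℝ] EuclideanSpace ℝ (Fin 3)) := by
    rw [hT, hu]; rfl
  have hKI : ∀ x, K (T x) = x := by
    intro x
    have h := congrArg (fun f => f x) u.inv_mul
    simp only [ContinuousLinearMap.mul_apply, ContinuousLinearMap.one_apply] at h
    rw [hId, hKdef]; exact h
  have hIK : ∀ x, T (K x) = x := by
    intro x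
    have h := congrArg (fun f => f x) u.mul_inv
    simp only [ContinuousLinearMap.mul_apply, ContinuousLinearMap.one_apply] at h
    rw [hId, hKdef]; exact h
  have hIn : T n = n := by
    rw [hT]; simp [hHn]
  have hKn : K n = n := by
    conv_lhs => rw [← hIn]
    exact hKI n
  -- the inner product constant
  set c := ⟪n, m⟫ with hc
  have hc0 : c ≠ 0 := by
    have : (0:ℝ) < c := lt_trans (by norm_num) hnm
    exact ne_of_gt this
  have hmn : ⟪m, n⟫ = c := by rw [hc]; exact (real_inner_comm m n).symm
  -- projector facts
  have hPP : ∀ x, orthProj n (orthProj n x) = orthProj n x :=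
    fun x => orthProj_of_inner n _ (inner_orthProj n hn x)
  have hPn : orthProj n n = 0 := by
    rw [orthProj_apply, hnn, one_smul, sub_self]
  -- the inverse
  set Binv : EuclideanSpace ℝ (Fin 3) →L[ℝ] EuclideanSpace ℝ (Fin 3) :=
    (K ∘L orthProj n) -
      c⁻¹ • (((innerSL ℝ m).comp (K ∘L orthProj n)).smulRight n) with hB
  have hBapp : ∀ y, Binv y =
      K (orthProj n y) - (c⁻¹ * ⟪m, K (orthProj n y)⟫) • n := by
    intro y
    simp [hB, smul_smul]
  have hmB : ∀ y, ⟪m, Binv y⟫ = 0 := by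
    intro y
    rw [hBapp, inner_sub_right, real_inner_smul_right, hmn]
    field_simp
    ring
  have hBP : ∀ y, Binv (orthProj n y) = Binv y := by
    intro y; rw [hBapp, hBapp, hPP]
  refine ⟨Binv, ?_, ?_, ?_⟩
  · refine ContinuousLinearMap.ext fun y => ?_
    simp only [comp_apply]
    rw [hBP, orthProj_of_inner m _ (hmB y)]
  · refine ContinuousLinearMap.ext fun y => ?_
    simp only [comp_apply]
    rw [orthProj_of_inner m _ (hmB y), hBapp, map_sub, map_smul, hIK, hIn,
      orthProj_apply (x := orthProj n y - _), inner_sub_right,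
      inner_orthProj n hn, real_inner_smul_right, hnn]
    simp [hPP]
  · refine ContinuousLinearMap.ext fun y => ?_
    simp only [comp_apply]
    set w := T (orthProj m y) with hw
    rw [hBapp, hPP, orthProj_apply n w, map_sub, map_smul, hKn]
    have hKw : K w = orthProj m y := hKI _
    rw [hKw, inner_sub_right, real_inner_smul_right,
      inner_orthProj m hm, hmn]
    have : c⁻¹ * (0 - ⟪n, w⟫ * c) = -⟪n, w⟫ := by field_simp; ring
    rw [this]
    module
end
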